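/- Let H be a complex Hilbert space regarded as a topological vector space with its weak topology, 𝔜 a Hausdorff topological vector space over ℂ, and Φ : H → 𝔜 a continuous injective linear map with dense range. Let S be a bounded normal operator on H and let T_1, T_2 be continuous linear operators on 𝔜 with T_1 ∘ Φ = Φ ∘ S and T_2 ∘ Φ = Φ ∘ S*. If both triples (Φ, S, T_1) and (Φ, S*, T_2) admit approximate inverse intertwinings, then T_1⁻¹(Φ(H)) = T_2⁻¹(Φ(H)); moreover, whenever T_1 y = Φ x_1 and T_2 y = Φ x_2 one has ‖x_1‖ = ‖x_2‖, and in particular ker T_1 = ker T_2. -/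

import Mathlib

open Filter ContinuousLinearMap

/-- An approximate inverse intertwining for `(Φ, S, T)` where the Hilbert space `H` carries
its weak topology: `F α (Φ x) → x` weakly in `H`, `Φ (F α y) → y` in `𝔜`, and
`F α (T y) - S (F α y) → 0` weakly in `H`, along the filter `l`. -/
def IsWeakAII {H : Type*} [NormedAddCommGroup H] [NormedSpace ℂ H]
    {𝔜 : Type*} [AddCommGroup 𝔜] [Module ℂ 𝔜] [TopologicalSpace 𝔜]
    {ι : Type*} (l : Filter ι)
    (Φ : H →ₗ[ℂ] 𝔜) (S : H →L[ℂ] H) (T : 𝔜 →L[ℂ] 𝔜)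
    (F : ι → (𝔜 →ₗ[ℂ] H)) : Prop :=
  (∀ x : H, Tendsto (fun α => (F α (Φ x) : WeakSpace ℂ H)) l (nhds (x : WeakSpace ℂ H))) ∧
  (∀ y : 𝔜, Tendsto (fun α => Φ (F α y)) l (nhds y)) ∧
  (∀ y : 𝔜, Tendsto (fun α => (F α (T y) - S (F α y) : WeakSpace ℂ H)) l
    (nhds (0 : WeakSpace ℂ H)))

section Aux

variable {H : Type*} [NormedAddCommGroup H] [InnerProductSpace ℂ H] [CompleteSpace H]

/-- A Douglas-type factorization lemma: if `‖B x‖ = ‖A x‖` for every `x`, then there is a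
bounded operator `V` with `V ∘ A = B`. -/
lemma exists_left_factor (A B : H →L[ℂ] H) (hAB : ∀ x, ‖B x‖ = ‖A x‖) :
    ∃ V : H →L[ℂ] H, ∀ x, V (A x) = B x := by
  classical
  set p : Submodule ℂ H := LinearMap.range (A : H →ₗ[ℂ] H) with hp
  have hmem : ∀ u : p, ∃ x : H, A x = (u : H) := fun u => u.2
  have hwd : ∀ x x' : H, A x = A x' → B x = B x' := by
    intro x x' h
    have h0 : ‖B x - B x'‖ = 0 := by
      rw [← map_sub, hAB, map_sub, h, sub_self, norm_zero]
    exact sub_eq_zero.mp (norm_eq_zero.mp h0)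
  let c : p → H := fun u => (hmem u).choose
  have hc : ∀ u : p, A (c u) = (u : H) := fun u => (hmem u).choose_spec
  let g₀ : p → H := fun u => B (c u)
  have hg₀ : ∀ (x : H) (hx : A x ∈ p), g₀ ⟨A x, hx⟩ = B x := by
    intro x hx
    exact hwd _ _ (by rw [hc ⟨A x, hx⟩])
  have hadd : ∀ u v : p, g₀ (u + v) = g₀ u + g₀ v := by
    intro u v
    have h1 : A (c (u + v)) = A (c u + c v) := by
      rw [map_add, hc, hc, hc]; rfl
    have := hwd _ _ h1
    simpa [g₀, map_add] using this
  have hsmul : ∀ (a : ℂ) (u : p), g₀ (a • u) = a • g₀ u := by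
    intro a u
    have h1 : A (c (a • u)) = A (a • c u) := by
      rw [map_smul, hc, hc]; rfl
    have := hwd _ _ h1
    simpa [g₀, map_smul] using this
  let glin : p →ₗ[ℂ] H :=
    { toFun := g₀, map_add' := hadd, map_smul' := hsmul }
  have hnorm : ∀ u : p, ‖glin u‖ = ‖u‖ := by
    intro u
    show ‖B (c u)‖ = ‖u‖
    rw [hAB, hc]
    rfl
  let g : p →L[ℂ] H := glin.mkContinuous 1 (fun u => by rw [hnorm, one_mul])
  set K : Submodule ℂ H := p.topologicalClosure with hK
  have hpK : p ≤ K := p.le_topologicalClosure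
  let elin : p →ₗ[ℂ] K := Submodule.inclusion hpK
  have helin : ∀ u : p, ‖elin u‖ = ‖u‖ := fun u => rfl
  let e : p →L[ℂ] K := elin.mkContinuous 1 (fun u => by rw [helin, one_mul])
  have he_iso : Isometry e := AddMonoidHomClass.isometry_of_norm e helin
  have h_e : IsUniformInducing e := he_iso.isUniformInducing
  have h_dense : DenseRange e := by
    intro x
    have himg : (Subtype.val '' Set.range e) = (p : Set H) := by
      ext z
      simp only [Set.mem_image, Set.mem_range, SetLike.mem_coe]
      constructor
      · rintro ⟨w, ⟨u, rfl⟩, rfl⟩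
        exact u.2
      · intro hz
        exact ⟨e ⟨z, hz⟩, ⟨⟨z, hz⟩, rfl⟩, rfl⟩
    have hx0 : (x : H) ∈ (p.topologicalClosure : Set H) := x.2
    rw [Submodule.topologicalClosure_coe] at hx0
    exact closure_subtype.mpr (by rw [himg]; exact hx0)
  let W : K →L[ℂ] H := g.extend e
  have hW : ∀ u : p, W (e u) = g u := fun u => ContinuousLinearMap.extend_eq g h_dense h_e u
  haveI : CompleteSpace K := Submodule.topologicalClosure.completeSpace p
  refine ⟨W.comp (Submodule.orthogonalProjection K), ?_⟩
  intro x
  have hxp : A x ∈ p := ⟨x, rfl⟩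
  have hxK : A x ∈ K := hpK hxp
  have hproj : Submodule.orthogonalProjection K (A x) = ⟨A x, hxK⟩ :=
    Submodule.orthogonalProjection_mem_subspace_eq_self (⟨A x, hxK⟩ : K)
  have he' : e ⟨A x, hxp⟩ = ⟨A x, hxK⟩ := rfl
  calc W.comp (Submodule.orthogonalProjection K) (A x)
      = W (Submodule.orthogonalProjection K (A x)) := rfl
    _ = W (e ⟨A x, hxp⟩) := by rw [hproj, he']
    _ = g ⟨A x, hxp⟩ := hW _
    _ = B x := hg₀ x hxp

variable {𝔜 : Type*} [AddCommGroup 𝔜] [Module ℂ 𝔜] [TopologicalSpace 𝔜]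
  [IsTopologicalAddGroup 𝔜] [ContinuousSMul ℂ 𝔜] [T2Space 𝔜]

omit [IsTopologicalAddGroup 𝔜] [ContinuousSMul ℂ 𝔜] in
/-- Key step: if `(Φ, A, T)` has an AII, `T'` intertwines via `Φ` with `adjoint A`, and `V` is
a bounded operator with `V ∘ A = adjoint A`, then `T y = Φ x₁` implies a convergence
statement for `A (F i y)` together with `T' y = Φ (V x₁)`. -/
lemma weak_aii_key (Φ : H →ₗ[ℂ] 𝔜) (hΦc : Continuous fun x : WeakSpace ℂ H => Φ x)
    (A : H →L[ℂ] H) (T T' : 𝔜 →L[ℂ] 𝔜)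
    (h' : ∀ x, T' (Φ x) = Φ (adjoint A x))
    {ι : Type*} (l : Filter ι) [l.NeBot] (F : ι → (𝔜 →ₗ[ℂ] H))
    (hF : IsWeakAII l Φ A T F)
    (V : H →L[ℂ] H) (hV : ∀ x, V (A x) = adjoint A x)
    (y : 𝔜) (x₁ : H) (hy : T y = Φ x₁) :
    Tendsto (fun i => A (F i y)) l (nhds x₁) ∧ T' y = Φ (V x₁) := by
  -- `Φ` is also continuous for the norm topology on `H`
  have hΦc' : Continuous fun x : H => Φ x :=
    hΦc.comp (toWeakSpaceCLM ℂ H).continuous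
  obtain ⟨hF1, hF2, hF3⟩ := hF
  have h1 : Tendsto (fun i => F i (T y)) l (nhds x₁) := by
    have := hF1 x₁
    rw [← hy] at this
    exact this
  have hSw : Tendsto (fun i => A (F i y)) l (nhds x₁) := by
    have h3 := hF3 y
    have h4 := h1.sub h3
    have h5 : (fun i => F i (T y) - (F i (T y) - A (F i y)))
        = fun i => A (F i y) := by
      funext i
      abel
    rw [h5] at h4
    convert h4 using 2
    exact (sub_zero x₁).symm
  refine ⟨hSw, ?_⟩
  have hVw : Tendsto (fun i => adjoint A (F i y)) l (nhds (V x₁)) := by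
    have h6 : Tendsto (fun i => V (A (F i y))) l (nhds (V x₁)) :=
      (V.continuous.tendsto _).comp hSw
    have hfun : (fun i => V (A (F i y))) = fun i => adjoint A (F i y) := by
      funext i
      exact hV _
    rwa [hfun] at h6
  have hΦV : Tendsto (fun i => Φ (adjoint A (F i y))) l (nhds (Φ (V x₁))) :=
    (hΦc'.tendsto _).comp hVw
  have hT' : Tendsto (fun i => Φ (adjoint A (F i y))) l (nhds (T' y)) := by
    have h5 : (fun i => Φ (adjoint A (F i y))) = fun i => T' (Φ (F i y)) := by
      funext i
      exact (h' _).symm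
    rw [h5]
    exact (T'.continuous.tendsto y).comp (hF2 y)
  exact tendsto_nhds_unique hT' hΦV

end Aux

/-- Suppose `S` is a normal operator on the Hilbert space `H` (regarded with its weak
topology), `Φ` intertwines `S` with `T₁` and `S*` with `T₂`, and both triples
`(Φ, S, T₁)` and `(Φ, S*, T₂)` admit approximate inverse intertwinings. Then
`T₁⁻¹(Im Φ) = T₂⁻¹(Im Φ)`, `‖Φ⁻¹ (T₁ y)‖ = ‖Φ⁻¹ (T₂ y)‖` on it, and
`ker T₁ = ker T₂`. -/
theorem aii_normal_norm_eq
    {H : Type*} [NormedAddCommGroup H] [InnerProductSpace ℂ H] [CompleteSpace H]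
    {𝔜 : Type*} [AddCommGroup 𝔜] [Module ℂ 𝔜] [TopologicalSpace 𝔜]
    [IsTopologicalAddGroup 𝔜] [ContinuousSMul ℂ 𝔜] [T2Space 𝔜]
    (Φ : H →ₗ[ℂ] 𝔜) (hΦc : Continuous fun x : WeakSpace ℂ H => Φ x)
    (hΦinj : Function.Injective Φ) (hΦdr : DenseRange Φ)
    (S : H →L[ℂ] H) (hS : adjoint S ∘L S = S ∘L adjoint S)
    (T₁ T₂ : 𝔜 →L[ℂ] 𝔜)
    (h₁ : ∀ x, T₁ (Φ x) = Φ (S x))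
    (h₂ : ∀ x, T₂ (Φ x) = Φ (adjoint S x))
    {ι₁ : Type*} (l₁ : Filter ι₁) [l₁.NeBot] (F₁ : ι₁ → (𝔜 →ₗ[ℂ] H))
    (hF₁ : IsWeakAII l₁ Φ S T₁ F₁)
    {ι₂ : Type*} (l₂ : Filter ι₂) [l₂.NeBot] (F₂ : ι₂ → (𝔜 →ₗ[ℂ] H))
    (hF₂ : IsWeakAII l₂ Φ (adjoint S) T₂ F₂) :
    (∀ y : 𝔜, (∃ x : H, T₁ y = Φ x) ↔ (∃ x : H, T₂ y = Φ x)) ∧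
    (∀ (y : 𝔜) (x₁ x₂ : H), T₁ y = Φ x₁ → T₂ y = Φ x₂ → ‖x₁‖ = ‖x₂‖) ∧
    (∀ y : 𝔜, T₁ y = 0 ↔ T₂ y = 0) := by
  have hSnormal : ∀ x, adjoint S (S x) = S (adjoint S x) := by
    intro x
    exact DFunLike.congr_fun hS x
  -- `‖S* x‖ = ‖S x‖`
  have hnorm : ∀ x, ‖adjoint S x‖ = ‖S x‖ := by
    intro x
    have h1 : (inner ℂ (adjoint S x) (adjoint S x) : ℂ) = inner ℂ (S x) (S x) := by
      rw [adjoint_inner_left, ← adjoint_inner_right S]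
      rw [hSnormal]
    rw [inner_self_eq_norm_sq_to_K, inner_self_eq_norm_sq_to_K] at h1
    have h3 : (‖adjoint S x‖ : ℝ) ^ 2 = ‖S x‖ ^ 2 := by exact_mod_cast h1
    nlinarith [norm_nonneg (adjoint S x), norm_nonneg (S x)]
  obtain ⟨V, hV⟩ := exists_left_factor S (adjoint S) hnorm
  obtain ⟨V', hV'⟩ := exists_left_factor (adjoint S) S (fun x => (hnorm x).symm)
  have hV'2 : ∀ x, V' (adjoint S x) = adjoint (adjoint S) x := by
    intro x
    rw [adjoint_adjoint]
    exact hV' x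
  have h₁' : ∀ x, T₁ (Φ x) = Φ (adjoint (adjoint S) x) := by
    intro x
    rw [adjoint_adjoint]
    exact h₁ x
  have key1 := fun (y : 𝔜) (x₁ : H) (hy : T₁ y = Φ x₁) =>
    weak_aii_key Φ hΦc S T₁ T₂ h₂ l₁ F₁ hF₁ V hV y x₁ hy
  have key2 := fun (y : 𝔜) (x₂ : H) (hy : T₂ y = Φ x₂) =>
    weak_aii_key Φ hΦc (adjoint S) T₂ T₁ h₁' l₂ F₂ hF₂ V' hV'2 y x₂ hy
  -- commutativity of `T₁` and `T₂`
  have hTT : ∀ z : 𝔜, T₁ (T₂ z) = T₂ (T₁ z) := by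
    have hrange : ∀ x : H, T₁ (T₂ (Φ x)) = T₂ (T₁ (Φ x)) := by
      intro x
      rw [h₂, h₁, h₁, h₂, hSnormal]
    have hc1 : Continuous fun z : 𝔜 => T₁ (T₂ z) := T₁.continuous.comp T₂.continuous
    have hc2 : Continuous fun z : 𝔜 => T₂ (T₁ z) := T₂.continuous.comp T₁.continuous
    have := hΦdr.equalizer hc1 hc2 (funext hrange)
    exact fun z => congrFun this z
  refine ⟨?_, ?_, ?_⟩
  · intro y
    constructor
    · rintro ⟨x₁, hx₁⟩
      exact ⟨V x₁, (key1 y x₁ hx₁).2⟩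
    · rintro ⟨x₂, hx₂⟩
      exact ⟨V' x₂, (key2 y x₂ hx₂).2⟩
  · intro y x₁ x₂ e₁ e₂
    obtain ⟨hSw, hT2⟩ := key1 y x₁ e₁
    have hx₂ : x₂ = V x₁ := hΦinj (e₂.symm.trans hT2)
    have hSx : adjoint S x₁ = S x₂ := by
      apply hΦinj
      rw [← h₂ x₁, ← h₁ x₂, ← e₁, ← e₂]
      exact (hTT y).symm
    -- convergence of `S* (F₁ i y)` to `x₂`
    have hS'w : Tendsto (fun i => adjoint S (F₁ i y)) l₁ (nhds x₂) := by
      have h6 : Tendsto (fun i => V (S (F₁ i y))) l₁ (nhds (V x₁)) :=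
        (V.continuous.tendsto _).comp hSw
      have hfun : (fun i => V (S (F₁ i y))) = fun i => adjoint S (F₁ i y) := by
        funext i
        exact hV _
      rw [hfun, ← hx₂] at h6
      exact h6
    -- pair against `x₁` resp. `x₂`
    have ha : Tendsto (fun i => (inner ℂ x₁ (S (F₁ i y)) : ℂ)) l₁
        (nhds (inner ℂ x₁ x₁ : ℂ)) := tendsto_const_nhds.inner hSw
    have hb : Tendsto (fun i => (inner ℂ x₂ (adjoint S (F₁ i y)) : ℂ)) l₁
        (nhds (inner ℂ x₂ x₂ : ℂ)) := tendsto_const_nhds.inner hS'w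
    have heq : ∀ i, (inner ℂ x₁ (S (F₁ i y)) : ℂ) = inner ℂ x₂ (adjoint S (F₁ i y)) := by
      intro i
      calc (inner ℂ x₁ (S (F₁ i y)) : ℂ)
          = inner ℂ (adjoint S x₁) (F₁ i y) := (adjoint_inner_left S (F₁ i y) x₁).symm
        _ = inner ℂ (S x₂) (F₁ i y) := by rw [hSx]
        _ = inner ℂ x₂ (adjoint S (F₁ i y)) := (adjoint_inner_right S x₂ (F₁ i y)).symm
    have hlim : (inner ℂ x₁ x₁ : ℂ) = inner ℂ x₂ x₂ := by
      refine tendsto_nhds_unique ?_ hb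
      rw [show (fun i => (inner ℂ x₂ (adjoint S (F₁ i y)) : ℂ))
          = fun i => (inner ℂ x₁ (S (F₁ i y)) : ℂ) from funext fun i => (heq i).symm]
      exact ha
    rw [inner_self_eq_norm_sq_to_K, inner_self_eq_norm_sq_to_K] at hlim
    have h3 : (‖x₁‖ : ℝ) ^ 2 = ‖x₂‖ ^ 2 := by exact_mod_cast hlim
    nlinarith [norm_nonneg x₁, norm_nonneg x₂]
  · intro y
    constructor
    · intro hy
      have hy' : T₁ y = Φ 0 := by rw [hy, map_zero]
      have := (key1 y 0 hy').2
      rwa [map_zero, map_zero] at this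
    · intro hy
      have hy' : T₂ y = Φ 0 := by rw [hy, map_zero]
      have := (key2 y 0 hy').2
      rwa [map_zero, map_zero] at this
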